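/- Let L : [0,∞) → ℝ^{N×N} be piecewise constant with all values symmetric positive semidefinite, let t_{k_0} = 0 < t_{k_1} < t_{k_2} < ⋯ be a subsequence of switching times, let N ⊆ ℝ^N be a subspace of dimension m equal to the null space of the integral-network Laplacian over each span [t_{k_l}, t_{k_{l+1}}), and suppose q ∈ (0,1) is such that the (m+1)-th largest eigenvalue of Φ_l^⊤Φ_l is at most q for every l, where Φ_l is the state transition matrix of ẋ = −L(t)x over [t_{k_l}, t_{k_{l+1}}]. If ω solves ω̇(t) = −L(t)ω(t) with ω(0) orthogonal to N, then ‖ω(t)‖ ≤ q^{l/2} ‖ω(0)‖ for all t ∈ [t_{k_l}, t_{k_{l+1}}) and all l ≥ 0; in particular ‖ω(t)‖ → 0 as t → ∞. -/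

import Mathlib

open Matrix Filter

/-- The Euclidean norm on `Fin n → ℝ`. -/
noncomputable def eNorm {n : ℕ} (v : Fin n → ℝ) : ℝ := Real.sqrt (∑ i, v i ^ 2)

namespace ErrorDecayAux

open Polynomial
open scoped RealInnerProductSpace

variable {n : ℕ}

lemma pow_mulVec_eigen (S : Matrix (Fin n) (Fin n) ℝ) (u : Fin n → ℝ) (μ : ℝ)
    (h : S *ᵥ u = μ • u) (j : ℕ) : (S ^ j) *ᵥ u = μ ^ j • u := by
  induction j with
  | zero => simp
  | succ j ih =>
    rw [pow_succ, ← Matrix.mulVec_mulVec, h, Matrix.mulVec_smul, ih, smul_smul, pow_succ]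
    ring_nf

lemma exp_mulVec_eigen (S : Matrix (Fin n) (Fin n) ℝ) (u : Fin n → ℝ) (μ : ℝ)
    (h : S *ᵥ u = μ • u) : NormedSpace.exp S *ᵥ u = Real.exp μ • u := by
  letI : SeminormedRing (Matrix (Fin n) (Fin n) ℝ) := Matrix.linftyOpSemiNormedRing
  letI : NormedRing (Matrix (Fin n) (Fin n) ℝ) := Matrix.linftyOpNormedRing
  letI : NormedAlgebra ℝ (Matrix (Fin n) (Fin n) ℝ) := Matrix.linftyOpNormedAlgebra
  have hsum : Summable (fun j : ℕ => (Nat.factorial j : ℝ)⁻¹ • S ^ j) :=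
    NormedSpace.expSeries_summable' S
  have hsumr : Summable (fun j : ℕ => (Nat.factorial j : ℝ)⁻¹ • μ ^ j) :=
    NormedSpace.expSeries_summable' μ
  let f : Matrix (Fin n) (Fin n) ℝ →ₗ[ℝ] (Fin n → ℝ) :=
    { toFun := fun M => M *ᵥ u
      map_add' := fun A B => Matrix.add_mulVec A B u
      map_smul' := fun c A => Matrix.smul_mulVec c A u }
  let F : Matrix (Fin n) (Fin n) ℝ →L[ℝ] (Fin n → ℝ) := ⟨f, f.continuous_of_finiteDimensional⟩
  have : NormedSpace.exp S *ᵥ u = F (NormedSpace.exp S) := rfl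
  rw [this, NormedSpace.exp_eq_tsum ℝ, F.map_tsum hsum]
  have : ∀ j : ℕ, F ((Nat.factorial j : ℝ)⁻¹ • S ^ j) = ((Nat.factorial j : ℝ)⁻¹ • μ ^ j) • u := by
    intro j
    have h2 : F (S ^ j) = μ ^ j • u := pow_mulVec_eigen S u μ h j
    rw [_root_.map_smul, h2, smul_smul, smul_eq_mul]
  rw [tsum_congr this, hsumr.tsum_smul_const]
  congr 1
  rw [Real.exp_eq_exp_ℝ, NormedSpace.exp_eq_tsum ℝ]

lemma inner_eq_dot (v w : EuclideanSpace ℝ (Fin n)) : ⟪v, w⟫ = (⇑v) ⬝ᵥ (⇑w) := by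
  simp [PiLp.inner_apply, RCLike.inner_apply, dotProduct, mul_comm]

lemma charpoly_conj (P Q A : Matrix (Fin n) (Fin n) ℝ) (hPQ : P * Q = 1) :
    (P * A * Q).charpoly = A.charpoly := by
  unfold Matrix.charpoly
  have h1 : charmatrix (P * A * Q) =
      (C : ℝ →+* ℝ[X]).mapMatrix P * charmatrix A * (C : ℝ →+* ℝ[X]).mapMatrix Q := by
    unfold charmatrix
    rw [mul_sub, sub_mul]
    congr 1
    · rw [← (Matrix.scalar_commute (X : ℝ[X]) (fun r => Commute.all _ _)
        ((C : ℝ →+* ℝ[X]).mapMatrix P)).eq, mul_assoc, ← RingHom.map_mul, hPQ,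
        _root_.map_one, mul_one]
    · rw [← RingHom.map_mul, ← RingHom.map_mul]
  rw [h1, det_mul, det_mul]
  rw [mul_comm ((C : ℝ →+* ℝ[X]).mapMatrix P).det _, mul_assoc]
  rw [RingHom.mapMatrix_apply, RingHom.mapMatrix_apply, ← det_mul, ← Matrix.map_mul, hPQ,
    Matrix.map_one _ (map_zero C) (map_one C), det_one, mul_one]

lemma charpoly_diagonal (d : Fin n → ℝ) :
    (diagonal d).charpoly = ∏ i, (X - C (d i)) := by
  unfold Matrix.charpoly
  have : charmatrix (diagonal d) = diagonal (fun i => X - C (d i)) := by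
    ext i j
    by_cases h : i = j
    · subst h; simp
    · simp [charmatrix_apply_ne _ _ _ h, diagonal_apply_ne _ h]
  rw [this, det_diagonal]

lemma spectral (A : Matrix (Fin n) (Fin n) ℝ) (hA : A.IsHermitian) :
    ∃ (u : Fin n → Fin n → ℝ) (lam : Fin n → ℝ),
      (∀ i j, u i ⬝ᵥ u j = if i = j then 1 else 0) ∧
      (∀ i, A *ᵥ u i = lam i • u i) ∧
      (∀ v : Fin n → ℝ, v = ∑ i, (u i ⬝ᵥ v) • u i) ∧
      A.charpoly = ∏ i, (X - C (lam i)) := by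
  refine ⟨fun i => ⇑(hA.eigenvectorBasis i), hA.eigenvalues, ?_, ?_, ?_, ?_⟩
  · intro i j
    rw [← inner_eq_dot]
    exact orthonormal_iff_ite.mp hA.eigenvectorBasis.orthonormal i j
  · exact hA.mulVec_eigenvectorBasis
  · intro v
    have h2 := (hA.eigenvectorBasis).sum_repr' (WithLp.toLp 2 v)
    have h3 : ∀ i, ⟪hA.eigenvectorBasis i, (WithLp.toLp 2 v)⟫
        = (⇑(hA.eigenvectorBasis i)) ⬝ᵥ v := fun i => inner_eq_dot _ _
    calc v = ⇑(∑ i, ⟪hA.eigenvectorBasis i, (WithLp.toLp 2 v)⟫ •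
            hA.eigenvectorBasis i) := by rw [h2]
      _ = ∑ i, ((⇑(hA.eigenvectorBasis i)) ⬝ᵥ v) • ⇑(hA.eigenvectorBasis i) := by
            rw [WithLp.ofLp_sum]
            simp only [WithLp.ofLp_smul]
            exact Finset.sum_congr rfl fun i _ => by rw [h3]
  · have hsp := hA.spectral_theorem
    have hV := (hA.eigenvectorUnitary).2
    rw [Unitary.mem_iff] at hV
    have : A.charpoly = (diagonal (RCLike.ofReal ∘ hA.eigenvalues)).charpoly := by
      conv_lhs => rw [hsp, Unitary.conjStarAlgAut_apply]
      exact charpoly_conj _ _ _ hV.2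
    rw [this, RCLike.ofReal_real_eq_id, Function.id_comp, charpoly_diagonal]

lemma sum_smul_dot (a : Fin n → ℝ) (u : Fin n → Fin n → ℝ) (w : Fin n → ℝ) :
    (∑ i, a i • u i) ⬝ᵥ w = ∑ i, a i * (u i ⬝ᵥ w) := by
  simp only [dotProduct, Finset.sum_apply, Pi.smul_apply, smul_eq_mul, Finset.sum_mul,
    Finset.mul_sum, mul_assoc]
  exact Finset.sum_comm

lemma dot_sum_sum (u : Fin n → Fin n → ℝ)
    (hu : ∀ i j, u i ⬝ᵥ u j = if i = j then 1 else 0) (a b : Fin n → ℝ) :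
    (∑ i, a i • u i) ⬝ᵥ (∑ j, b j • u j) = ∑ i, a i * b i := by
  rw [sum_smul_dot]
  refine Finset.sum_congr rfl fun i _ => ?_
  congr 1
  rw [dotProduct_comm, sum_smul_dot]
  simp [hu, dotProduct_comm (u i)]

lemma mulVec_eigen_expand (M : Matrix (Fin n) (Fin n) ℝ) (u : Fin n → Fin n → ℝ)
    (d : Fin n → ℝ) (hM : ∀ i, M *ᵥ u i = d i • u i)
    (hcompl : ∀ v : Fin n → ℝ, v = ∑ i, (u i ⬝ᵥ v) • u i) (x : Fin n → ℝ) :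
    M *ᵥ x = ∑ i, ((u i ⬝ᵥ x) * d i) • u i := by
  conv_lhs => rw [hcompl x]
  rw [show M *ᵥ (∑ i, (u i ⬝ᵥ x) • u i) = ∑ i, (u i ⬝ᵥ x) • (M *ᵥ u i) by
    rw [← Matrix.mulVecLin_apply, map_sum]
    exact Finset.sum_congr rfl fun i _ => by rw [LinearMap.map_smul, Matrix.mulVecLin_apply]]
  exact Finset.sum_congr rfl fun i _ => by rw [hM i, smul_smul]

lemma exp_contract (L : Matrix (Fin n) (Fin n) ℝ) (hL : L.PosSemidef)
    (u : Fin n → Fin n → ℝ) (lam : Fin n → ℝ)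
    (hu : ∀ i j, u i ⬝ᵥ u j = if i = j then 1 else 0)
    (heig : ∀ i, L *ᵥ u i = lam i • u i)
    (hcompl : ∀ v : Fin n → ℝ, v = ∑ i, (u i ⬝ᵥ v) • u i)
    (c : ℝ) (hc : 0 ≤ c) (v : Fin n → ℝ) :
    (NormedSpace.exp (-c • L) *ᵥ v) ⬝ᵥ (NormedSpace.exp (-c • L) *ᵥ v) ≤ v ⬝ᵥ v := by
  have hlam : ∀ i, 0 ≤ lam i := by
    intro i
    have h2 := hL.dotProduct_mulVec_nonneg (u i)
    rw [heig i, star_trivial, dotProduct_smul, smul_eq_mul, hu i i] at h2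
    simpa using h2
  set d : Fin n → ℝ := fun i => Real.exp (-(c * lam i)) with hd
  have hM : ∀ i, NormedSpace.exp (-c • L) *ᵥ u i = d i • u i := by
    intro i
    refine exp_mulVec_eigen _ _ _ ?_
    rw [Matrix.smul_mulVec, heig i, smul_smul, neg_mul]
  have hd1 : ∀ i, d i ≤ 1 := fun i =>
    Real.exp_le_one_iff.mpr (neg_nonpos.mpr (mul_nonneg hc (hlam i)))
  have hd0 : ∀ i, 0 ≤ d i := fun i => (Real.exp_pos _).le
  have hv : NormedSpace.exp (-c • L) *ᵥ v = ∑ i, ((u i ⬝ᵥ v) * d i) • u i :=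
    mulVec_eigen_expand _ u d hM hcompl v
  rw [hv, dot_sum_sum u hu]
  conv_rhs => rw [hcompl v]
  rw [dot_sum_sum u hu]
  refine Finset.sum_le_sum fun i _ => ?_
  have : ((u i ⬝ᵥ v) * d i) * ((u i ⬝ᵥ v) * d i) = ((u i ⬝ᵥ v) * (u i ⬝ᵥ v)) * (d i * d i) := by
    ring
  rw [this]
  exact mul_le_of_le_one_right (mul_self_nonneg _) (mul_le_one₀ (hd1 i) (hd0 i) (hd1 i))

lemma prod_mulVec_fix (Ms : List (Matrix (Fin n) (Fin n) ℝ)) (v : Fin n → ℝ)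
    (h : ∀ M ∈ Ms, M *ᵥ v = v) : Ms.prod *ᵥ v = v := by
  induction Ms with
  | nil => simp [Matrix.one_mulVec]
  | cons M Ms ih =>
    rw [List.prod_cons, ← Matrix.mulVec_mulVec,
      ih fun M' hM' => h M' (List.mem_cons_of_mem _ hM'), h M List.mem_cons_self]

open scoped Classical in
lemma key (m : ℕ) (q : ℝ) (hq1 : q < 1) (Φ : Matrix (Fin n) (Fin n) ℝ)
    (Nsp : Submodule ℝ (Fin n → ℝ)) (hdim : Module.finrank ℝ Nsp = m)
    (hfix : ∀ v ∈ Nsp, Φ *ᵥ v = v) (hfixT : ∀ v ∈ Nsp, Φᵀ *ᵥ v = v)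
    (μ : Fin n → ℝ) (hμa : Antitone μ)
    (hchar : (Φᵀ * Φ).charpoly = ∏ i : Fin n, (X - C (μ i)))
    (hμq : ∀ i : Fin n, (i : ℕ) = m → μ i ≤ q)
    (x : Fin n → ℝ) (hx : ∀ v ∈ Nsp, x ⬝ᵥ v = 0) :
    (Φ *ᵥ x) ⬝ᵥ (Φ *ᵥ x) ≤ q * (x ⬝ᵥ x) ∧ ∀ v ∈ Nsp, (Φ *ᵥ x) ⬝ᵥ v = 0 := by
  have hperp : ∀ v ∈ Nsp, (Φ *ᵥ x) ⬝ᵥ v = 0 := by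
    intro v hv
    calc (Φ *ᵥ x) ⬝ᵥ v = (x ᵥ* Φᵀ) ⬝ᵥ v := by rw [Matrix.vecMul_transpose]
      _ = x ⬝ᵥ (Φᵀ *ᵥ v) := (Matrix.dotProduct_mulVec x Φᵀ v).symm
      _ = x ⬝ᵥ v := by rw [hfixT v hv]
      _ = 0 := hx v hv
  refine ⟨?_, hperp⟩
  by_cases hm : m < n
  swap
  · have hmn : m = n := le_antisymm (hdim ▸ (Submodule.finrank_le Nsp).trans_eq
      (Module.finrank_fin_fun ℝ)) (not_lt.mp hm)
    have hNt : Nsp = ⊤ := Submodule.eq_top_of_finrank_eq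
      (by rw [hdim, Module.finrank_fin_fun, hmn])
    have hx0 : x = 0 := by
      have := hx x (hNt ▸ Submodule.mem_top)
      rwa [dotProduct_self_eq_zero] at this
    simp [hx0, Matrix.mulVec_zero]
  set A := Φᵀ * Φ with hAdef
  have hA : A.IsHermitian := by
    rw [hAdef, ← Matrix.conjTranspose_eq_transpose_of_trivial]
    exact Matrix.isHermitian_conjTranspose_mul_self Φ
  have hAT : Aᵀ = A := by
    rw [← Matrix.conjTranspose_eq_transpose_of_trivial]; exact hA
  obtain ⟨u, lam, hu, heig, hcompl, hcharA⟩ := spectral A hA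
  have hms : Multiset.map lam Finset.univ.val = Multiset.map μ Finset.univ.val := by
    have e1 : ∏ i : Fin n, (X - C (lam i))
        = ((Finset.univ.val.map lam).map (fun a => X - C a)).prod := by
      rw [Multiset.map_map]; rfl
    have e2 : ∏ i : Fin n, (X - C (μ i))
        = ((Finset.univ.val.map μ).map (fun a => X - C a)).prod := by
      rw [Multiset.map_map]; rfl
    have := hcharA.symm.trans hchar
    rw [e1, e2] at this
    have := congrArg Polynomial.roots this
    rwa [Polynomial.roots_multiset_prod_X_sub_C, Polynomial.roots_multiset_prod_X_sub_C] at this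
  set S := Finset.univ.filter (fun i => q < lam i) with hSdef
  set T := Finset.univ.filter (fun i => lam i = 1) with hTdef
  have hcards : S.card = (Finset.univ.filter (fun i => q < μ i)).card := by
    have c1 : S.card = Multiset.countP (fun a => q < a) (Multiset.map lam Finset.univ.val) := by
      rw [Multiset.countP_map]
      rfl
    have c2 : (Finset.univ.filter (fun i => q < μ i)).card
        = Multiset.countP (fun a => q < a) (Multiset.map μ Finset.univ.val) := by
      rw [Multiset.countP_map]
      rfl
    rw [c1, c2, hms]
  have hSm : S.card ≤ m := by
    rw [hcards]
    refine le_trans (Finset.card_le_card_of_injOn (fun i => (i : ℕ))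
      (fun i hi => ?_) (fun a _ b _ h => Fin.val_injective h)) (Finset.card_range m).le
    rw [Finset.mem_coe, Finset.mem_filter] at hi
    rw [Finset.mem_coe, Finset.mem_range]
    by_contra hcon
    push_neg at hcon
    have : μ i ≤ μ ⟨m, hm⟩ := hμa (by simpa [Fin.le_def] using hcon)
    exact absurd (lt_of_lt_of_le hi.2 (this.trans (hμq ⟨m, hm⟩ rfl))) (lt_irrefl q)
  have hTS : T ⊆ S := by
    intro i hi
    rw [Finset.mem_filter] at hi ⊢
    exact ⟨hi.1, hi.2 ▸ hq1⟩
  set W := Submodule.span ℝ (↑(T.image u) : Set (Fin n → ℝ)) with hWdef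
  have hNW : Nsp ≤ W := by
    intro v hv
    have hAv : A *ᵥ v = v := by
      rw [hAdef, ← Matrix.mulVec_mulVec, hfix v hv, hfixT v hv]
    have hcoef : ∀ j, lam j ≠ 1 → u j ⬝ᵥ v = 0 := by
      intro j hj
      have h1 : u j ⬝ᵥ (A *ᵥ v) = lam j * (u j ⬝ᵥ v) := by
        rw [Matrix.dotProduct_mulVec, ← hAT, Matrix.vecMul_transpose, heig j,
          smul_dotProduct, smul_eq_mul]
      rw [hAv] at h1
      have h2 : (lam j - 1) * (u j ⬝ᵥ v) = 0 := by linear_combination -h1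
      rcases mul_eq_zero.mp h2 with h | h
      · exact absurd (by linarith : lam j = (1:ℝ)) hj
      · exact h
    rw [hcompl v]
    refine Submodule.sum_mem _ fun i _ => ?_
    by_cases hli : lam i = 1
    · refine Submodule.smul_mem _ _ (Submodule.subset_span ?_)
      rw [Finset.coe_image]
      exact Set.mem_image_of_mem u (by simp [hTdef, hli])
    · rw [hcoef i hli, zero_smul]
      exact W.zero_mem
  have hmW : m ≤ Module.finrank ℝ W :=
    hdim ▸ Submodule.finrank_mono hNW
  have hWT : Module.finrank ℝ W ≤ T.card :=
    le_trans (finrank_span_finset_le_card _) Finset.card_image_le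
  have hTm : T.card = m ∧ S.card = m := by
    have h1 : m ≤ T.card := le_trans hmW hWT
    have h2 : T.card ≤ S.card := Finset.card_le_card hTS
    omega
  have hTSeq : T = S := Finset.eq_of_subset_of_card_le hTS (by omega)
  have hNsp : Nsp = W := Submodule.eq_of_le_of_finrank_le hNW (by rw [hdim]; omega)
  have hcx : ∀ i ∈ S, u i ⬝ᵥ x = 0 := by
    intro i hi
    rw [← hTSeq] at hi
    have hui : u i ∈ Nsp := by
      rw [hNsp]
      exact Submodule.subset_span (by rw [Finset.coe_image]; exact Set.mem_image_of_mem u hi)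
    rw [dotProduct_comm]
    exact hx (u i) hui
  have hid : (Φ *ᵥ x) ⬝ᵥ (Φ *ᵥ x) = x ⬝ᵥ (A *ᵥ x) := by
    rw [hAdef, ← Matrix.mulVec_mulVec, Matrix.dotProduct_mulVec x Φᵀ, Matrix.vecMul_transpose]
  have h1 : x ⬝ᵥ (A *ᵥ x) = ∑ i, (u i ⬝ᵥ x) * ((u i ⬝ᵥ x) * lam i) := by
    have e1 : x ⬝ᵥ (A *ᵥ x)
        = (∑ i, (u i ⬝ᵥ x) • u i) ⬝ᵥ (∑ i, ((u i ⬝ᵥ x) * lam i) • u i) := by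
      rw [← hcompl x, mulVec_eigen_expand A u lam heig hcompl x]
    rw [e1, dot_sum_sum u hu]
  have h2 : x ⬝ᵥ x = ∑ i, (u i ⬝ᵥ x) * (u i ⬝ᵥ x) := by
    have e2 : x ⬝ᵥ x = (∑ i, (u i ⬝ᵥ x) • u i) ⬝ᵥ (∑ i, (u i ⬝ᵥ x) • u i) := by
      rw [← hcompl x]
    rw [e2, dot_sum_sum u hu]
  rw [hid, h1, h2, Finset.mul_sum]
  refine Finset.sum_le_sum fun i _ => ?_
  by_cases hiS : i ∈ S
  · rw [hcx i hiS]
    simp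
  · have hlq : lam i ≤ q := by
      rw [hSdef, Finset.mem_filter] at hiS
      push_neg at hiS
      exact hiS (Finset.mem_univ i)
    have := mul_self_nonneg (u i ⬝ᵥ x)
    nlinarith

lemma sum_mulVec {ι : Type*} (s : Finset ι) (A : ι → Matrix (Fin n) (Fin n) ℝ) (v : Fin n → ℝ) :
    (∑ i ∈ s, A i) *ᵥ v = ∑ i ∈ s, A i *ᵥ v := by
  classical
  induction s using Finset.induction with
  | empty => simp [Matrix.zero_mulVec]
  | insert _ _ h ih => rw [Finset.sum_insert h, Finset.sum_insert h, Matrix.add_mulVec, ih]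

lemma dot_finsum {ι : Type*} (s : Finset ι) (v : Fin n → ℝ) (w : ι → Fin n → ℝ) :
    v ⬝ᵥ (∑ i ∈ s, w i) = ∑ i ∈ s, v ⬝ᵥ (w i) := by
  simp only [dotProduct, Finset.sum_apply, Finset.mul_sum]
  exact Finset.sum_comm

end ErrorDecayAux

open ErrorDecayAux

/-- Consider the switched system `ω̇ = -L(t) ω` with piecewise-constant
symmetric positive semidefinite generator, a subsequence of switching times
`t (k 0) = 0 < t (k 1) < ⋯`, a subspace `Nsp` of dimension `m` equal to the null space of the
integral-network Laplacian over each span `[t (k l), t (k (l+1)))`, and `q ∈ (0,1)` such that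
the `(m+1)`-st largest eigenvalue of `Φₗᵀ Φₗ` is at most `q` for every `l`. If `ω` solves the
system with `ω(0)` orthogonal to `Nsp`, then `‖ω(s)‖ ≤ q^{l/2} ‖ω(0)‖` for all
`s ∈ [t (k l), t (k (l+1)))` and all `l`; in particular `‖ω(s)‖ → 0` as `s → ∞`. -/
theorem error_decay_geometric
    (n m : ℕ)
    (t : ℕ → ℝ) (ht0 : t 0 = 0) (htmono : StrictMono t)
    (htlim : Tendsto t atTop atTop)
    (L : ℝ → Matrix (Fin n) (Fin n) ℝ)
    (hLpsd : ∀ s : ℝ, 0 ≤ s → (L s).PosSemidef)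
    (hLpc : ∀ k : ℕ, ∀ s ∈ Set.Ico (t k) (t (k + 1)), L s = L (t k))
    (k : ℕ → ℕ) (hk0 : k 0 = 0) (hkmono : StrictMono k)
    (q : ℝ) (hq : q ∈ Set.Ioo (0 : ℝ) 1)
    (Nsp : Submodule ℝ (Fin n → ℝ))
    (hNdim : Module.finrank ℝ ↥Nsp = m)
    (hker : ∀ l : ℕ,
      LinearMap.ker ((t (k (l + 1)) - t (k l))⁻¹ •
        ∑ i ∈ Finset.range (k (l + 1) - k l),
          (t (k l + i + 1) - t (k l + i)) • L (t (k l + i))).mulVecLin = Nsp)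
    (Φl : ℕ → Matrix (Fin n) (Fin n) ℝ)
    (hΦl : ∀ l : ℕ, Φl l = ((List.ofFn fun i : Fin (k (l + 1) - k l) =>
      NormedSpace.exp
        (-(t (k l + (i : ℕ) + 1) - t (k l + (i : ℕ))) • L (t (k l + (i : ℕ))))).reverse).prod)
    (hμ : ∀ l : ℕ, ∃ μ : Fin n → ℝ, Antitone μ ∧
      ((Φl l)ᵀ * Φl l).charpoly = (∏ i : Fin n, (Polynomial.X - Polynomial.C (μ i))) ∧
      ∀ i : Fin n, (i : ℕ) = m → μ i ≤ q)
    (ω : ℝ → (Fin n → ℝ))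
    (hω : ∀ k' : ℕ, ∀ s ∈ Set.Icc (t k') (t (k' + 1)),
      ω s = NormedSpace.exp (-(s - t k') • L (t k')) *ᵥ ω (t k'))
    (hωperp : ∀ v ∈ Nsp, ω 0 ⬝ᵥ v = 0) :
    (∀ l : ℕ, ∀ s ∈ Set.Ico (t (k l)) (t (k (l + 1))),
      eNorm (ω s) ≤ q ^ ((l : ℝ) / 2) * eNorm (ω 0)) ∧
    Tendsto (fun s => eNorm (ω s)) atTop (nhds 0) := by
  have htn : ∀ j : ℕ, 0 ≤ t j := fun j => ht0 ▸ htmono.monotone (Nat.zero_le j)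
  -- Nsp is killed by each Laplacian in each span
  have hLzero : ∀ l : ℕ, ∀ i : ℕ, i < k (l + 1) - k l →
      ∀ v ∈ Nsp, L (t (k l + i)) *ᵥ v = 0 := by
    intro l i hi v hv
    rw [← hker l, LinearMap.mem_ker, Matrix.mulVecLin_apply] at hv
    have hc : (0:ℝ) < t (k (l + 1)) - t (k l) :=
      sub_pos.mpr (htmono (hkmono (Nat.lt_succ_self l)))
    rw [Matrix.smul_mulVec, smul_eq_zero] at hv
    have hv' : (∑ i ∈ Finset.range (k (l + 1) - k l),
        (t (k l + i + 1) - t (k l + i)) • L (t (k l + i))) *ᵥ v = 0 := by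
      rcases hv with h | h
      · exact absurd h (inv_ne_zero (ne_of_gt hc))
      · exact h
    have hdot : ∑ j ∈ Finset.range (k (l + 1) - k l),
        (t (k l + j + 1) - t (k l + j)) * (v ⬝ᵥ (L (t (k l + j)) *ᵥ v)) = 0 := by
      have := congrArg (fun w => v ⬝ᵥ w) hv'
      simpa [sum_mulVec, dot_finsum, Matrix.smul_mulVec, dotProduct_smul]
        using this
    have hterm : ∀ j ∈ Finset.range (k (l + 1) - k l),
        0 ≤ (t (k l + j + 1) - t (k l + j)) * (v ⬝ᵥ (L (t (k l + j)) *ᵥ v)) := by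
      intro j _
      refine mul_nonneg (sub_nonneg.mpr (htmono.monotone (Nat.le_succ _))) ?_
      have := (hLpsd _ (htn (k l + j))).dotProduct_mulVec_nonneg v
      rwa [star_trivial] at this
    have hall := (Finset.sum_eq_zero_iff_of_nonneg hterm).mp hdot i (Finset.mem_range.mpr hi)
    have hΔ : (0:ℝ) < t (k l + i + 1) - t (k l + i) :=
      sub_pos.mpr (htmono (Nat.lt_succ_self _))
    have hdz : v ⬝ᵥ (L (t (k l + i)) *ᵥ v) = 0 := by
      rcases mul_eq_zero.mp hall with h | h
      · exact absurd h (ne_of_gt hΔ)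
      · exact h
    have := (hLpsd _ (htn (k l + i))).dotProduct_mulVec_zero_iff v
    rw [star_trivial] at this
    exact this.mp hdz
  -- each exponential factor fixes Nsp
  have exp_fix : ∀ (S : Matrix (Fin n) (Fin n) ℝ) (v : Fin n → ℝ), S *ᵥ v = 0 →
      NormedSpace.exp S *ᵥ v = v := by
    intro S v h
    rw [exp_mulVec_eigen S v 0 (by rw [h, zero_smul]), Real.exp_zero, one_smul]
  have hfix : ∀ l : ℕ, ∀ v ∈ Nsp, Φl l *ᵥ v = v := by
    intro l v hv
    rw [hΦl l]
    refine prod_mulVec_fix _ _ fun M hM => ?_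
    rw [List.mem_reverse] at hM
    obtain ⟨i, rfl⟩ := List.mem_ofFn.mp hM
    exact exp_fix _ _ (by rw [Matrix.smul_mulVec, hLzero l i i.isLt v hv, smul_zero])
  have hfixT : ∀ l : ℕ, ∀ v ∈ Nsp, (Φl l)ᵀ *ᵥ v = v := by
    intro l v hv
    rw [hΦl l, Matrix.transpose_list_prod]
    refine prod_mulVec_fix _ _ fun M hM => ?_
    rw [List.mem_reverse, List.mem_map] at hM
    obtain ⟨a, ha, rfl⟩ := hM
    rw [List.mem_reverse] at ha
    obtain ⟨i, rfl⟩ := List.mem_ofFn.mp ha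
    rw [← Matrix.exp_transpose]
    have hsym : (L (t (k l + (i:ℕ))))ᵀ = L (t (k l + (i:ℕ))) := by
      rw [← Matrix.conjTranspose_eq_transpose_of_trivial]
      exact (hLpsd _ (htn _)).1
    rw [Matrix.transpose_smul, hsym]
    exact exp_fix _ _ (by rw [Matrix.smul_mulVec, hLzero l i i.isLt v hv, smul_zero])
  -- product formula over consecutive intervals
  have hprod : ∀ (j N : ℕ), ω (t (j + N)) = ((List.ofFn fun i : Fin N =>
      NormedSpace.exp
        (-(t (j + (i:ℕ) + 1) - t (j + (i:ℕ))) • L (t (j + (i:ℕ))))).reverse).prod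
      *ᵥ ω (t j) := by
    intro j N
    induction N with
    | zero => simp [Matrix.one_mulVec]
    | succ N ih =>
      rw [List.ofFn_succ', List.concat_eq_append, List.reverse_concat', List.prod_cons,
        ← Matrix.mulVec_mulVec]
      simp only [Fin.coe_castSucc, Fin.val_last]
      rw [← ih]
      have : j + (N + 1) = (j + N) + 1 := rfl
      rw [this]
      exact hω (j + N) (t (j + N + 1)) ⟨htmono.monotone (Nat.le_succ _), le_rfl⟩
  have hΦω : ∀ l : ℕ, ω (t (k (l + 1))) = Φl l *ᵥ ω (t (k l)) := by
    intro l
    have hle : k l ≤ k (l + 1) := (hkmono (Nat.lt_succ_self l)).le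
    have h := hprod (k l) (k (l + 1) - k l)
    rw [Nat.add_sub_cancel' hle] at h
    rw [h, hΦl l]
  -- per-interval decrease
  have hdec : ∀ (j : ℕ) (s : ℝ), s ∈ Set.Icc (t j) (t (j + 1)) →
      ω s ⬝ᵥ ω s ≤ ω (t j) ⬝ᵥ ω (t j) := by
    intro j s hs
    obtain ⟨u, lam, hu, heig, hcompl, -⟩ := spectral (L (t j)) (hLpsd (t j) (htn j)).1
    rw [hω j s hs]
    exact exp_contract _ (hLpsd (t j) (htn j)) u lam hu heig hcompl (s - t j)
      (sub_nonneg.mpr hs.1) _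
  have hmono2 : ∀ a b : ℕ, a ≤ b → ω (t b) ⬝ᵥ ω (t b) ≤ ω (t a) ⬝ᵥ ω (t a) := by
    intro a b hab
    induction b, hab using Nat.le_induction with
    | base => exact le_rfl
    | succ b hb ih =>
      exact le_trans (hdec b (t (b + 1)) ⟨(htmono (Nat.lt_succ_self b)).le, le_rfl⟩) ih
  -- main geometric induction
  have hmain : ∀ l : ℕ, ω (t (k l)) ⬝ᵥ ω (t (k l)) ≤ q ^ l * (ω 0 ⬝ᵥ ω 0) ∧
      ∀ v ∈ Nsp, ω (t (k l)) ⬝ᵥ v = 0 := by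
    intro l
    induction l with
    | zero =>
      rw [hk0, ht0]
      exact ⟨by simpa using le_rfl, hωperp⟩
    | succ l ih =>
      obtain ⟨μ, hμa, hchar, hμq⟩ := hμ l
      have hkey := key m q hq.2 (Φl l) Nsp hNdim (hfix l) (hfixT l) μ hμa hchar hμq
        (ω (t (k l))) ih.2
      refine ⟨?_, by rw [hΦω l]; exact hkey.2⟩
      rw [hΦω l]
      calc (Φl l *ᵥ ω (t (k l))) ⬝ᵥ (Φl l *ᵥ ω (t (k l)))
          ≤ q * (ω (t (k l)) ⬝ᵥ ω (t (k l))) := hkey.1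
        _ ≤ q * (q ^ l * (ω 0 ⬝ᵥ ω 0)) := mul_le_mul_of_nonneg_left ih.1 hq.1.le
        _ = q ^ (l + 1) * (ω 0 ⬝ᵥ ω 0) := by ring
  -- eNorm facts
  have heNorm : ∀ v : Fin n → ℝ, eNorm v = Real.sqrt (v ⬝ᵥ v) := by
    intro v
    unfold eNorm
    congr 1
    exact Finset.sum_congr rfl fun i _ => by rw [pow_two]
  have heNn : ∀ v : Fin n → ℝ, 0 ≤ eNorm v := fun v => Real.sqrt_nonneg _
  have hsqrt : ∀ l : ℕ, Real.sqrt (q ^ l) = q ^ ((l : ℝ) / 2) := by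
    intro l
    rw [Real.sqrt_eq_rpow, ← Real.rpow_natCast q l, ← Real.rpow_mul hq.1.le, mul_one_div]
  -- part 1
  have part1 : ∀ l : ℕ, ∀ s ∈ Set.Ico (t (k l)) (t (k (l + 1))),
      eNorm (ω s) ≤ q ^ ((l : ℝ) / 2) * eNorm (ω 0) := by
    intro l s hs
    have hex : ∃ j : ℕ, s < t (j + 1) := by
      obtain ⟨b, hb⟩ := (htlim.eventually_gt_atTop s).exists
      exact ⟨b, lt_of_lt_of_le hb (htmono.monotone (Nat.le_succ b))⟩
    set j := Nat.find hex with hjdef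
    have hj1 : s < t (j + 1) := Nat.find_spec hex
    have hj2 : t j ≤ s := by
      rcases Nat.eq_zero_or_pos j with h0 | h0
      · rw [h0, ht0]
        exact le_trans (ht0 ▸ htmono.monotone (Nat.zero_le (k l))) hs.1
      · obtain ⟨j', hj'⟩ := Nat.exists_eq_succ_of_ne_zero (Nat.pos_iff_ne_zero.mp h0)
        have hmin := Nat.find_min hex (show j' < Nat.find hex by rw [← hjdef]; omega)
        push_neg at hmin
        rw [hj']
        exact hmin
    have hjkl : k l ≤ j := by
      by_contra hcon
      push_neg at hcon
      exact absurd (le_trans (htmono.monotone (by omega : j + 1 ≤ k l)) hs.1)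
        (not_le.mpr hj1)
    have hd : ω s ⬝ᵥ ω s ≤ q ^ l * (ω 0 ⬝ᵥ ω 0) :=
      le_trans (hdec j s ⟨hj2, hj1.le⟩) (le_trans (hmono2 (k l) j hjkl) (hmain l).1)
    rw [heNorm, heNorm]
    calc Real.sqrt (ω s ⬝ᵥ ω s) ≤ Real.sqrt (q ^ l * (ω 0 ⬝ᵥ ω 0)) := Real.sqrt_le_sqrt hd
      _ = Real.sqrt (q ^ l) * Real.sqrt (ω 0 ⬝ᵥ ω 0) := Real.sqrt_mul (pow_nonneg hq.1.le l) _
      _ = q ^ ((l : ℝ) / 2) * Real.sqrt (ω 0 ⬝ᵥ ω 0) := by rw [hsqrt l]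
  refine ⟨part1, ?_⟩
  -- part 2: convergence to zero
  have hrq : Real.sqrt q < 1 := by
    have := Real.sqrt_lt_sqrt hq.1.le hq.2
    rwa [Real.sqrt_one] at this
  have hpow : ∀ l : ℕ, q ^ ((l : ℝ) / 2) = Real.sqrt q ^ l := by
    intro l
    rw [← hsqrt l]
    rw [Real.sqrt_eq_rpow, Real.sqrt_eq_rpow, ← Real.rpow_natCast (q ^ (1/2 : ℝ)) l,
      ← Real.rpow_mul hq.1.le, ← Real.rpow_natCast q l, ← Real.rpow_mul hq.1.le]
    ring_nf
  have hgeo : Tendsto (fun l : ℕ => Real.sqrt q ^ l * eNorm (ω 0)) atTop (nhds 0) := by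
    have := (tendsto_pow_atTop_nhds_zero_of_lt_one (Real.sqrt_nonneg q) hrq).mul_const
      (eNorm (ω 0))
    simpa using this
  rw [Metric.tendsto_nhds]
  intro ε hε
  obtain ⟨l₀, hl₀⟩ := (hgeo.eventually (gt_mem_nhds hε)).exists
  rw [eventually_atTop]
  refine ⟨t (k l₀), fun s hs => ?_⟩
  have hex : ∃ l' : ℕ, s < t (k (l' + 1)) := by
    have hklim : Tendsto (fun l : ℕ => t (k l)) atTop atTop :=
      htlim.comp hkmono.tendsto_atTop
    obtain ⟨b, hb⟩ := (hklim.eventually_gt_atTop s).exists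
    exact ⟨b, lt_of_lt_of_le hb (htmono.monotone (hkmono.monotone (Nat.le_succ b)))⟩
  set l' := Nat.find hex with hl'def
  have hlb1 : s < t (k (l' + 1)) := Nat.find_spec hex
  have hlb2 : t (k l') ≤ s := by
    rcases Nat.eq_zero_or_pos l' with h0 | h0
    · rw [h0, hk0, ht0]
      exact le_trans (htn (k l₀)) hs
    · obtain ⟨j', hj'⟩ := Nat.exists_eq_succ_of_ne_zero (Nat.pos_iff_ne_zero.mp h0)
      have hmin := Nat.find_min hex (show j' < Nat.find hex by rw [← hl'def]; omega)
      push_neg at hmin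
      rw [hj']
      exact hmin
  have hll : l₀ ≤ l' := by
    by_contra hcon
    push_neg at hcon
    exact absurd (le_trans (htmono.monotone (hkmono.monotone (by omega : l' + 1 ≤ l₀))) hs)
      (not_le.mpr hlb1)
  have hb1 : eNorm (ω s) ≤ q ^ ((l' : ℝ) / 2) * eNorm (ω 0) :=
    part1 l' s ⟨hlb2, hlb1⟩
  have hb2 : q ^ ((l' : ℝ) / 2) * eNorm (ω 0) ≤ Real.sqrt q ^ l₀ * eNorm (ω 0) := by
    rw [hpow l']
    exact mul_le_mul_of_nonneg_right
      (pow_le_pow_of_le_one (Real.sqrt_nonneg q) hrq.le hll) (heNn _)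
  rw [Real.dist_eq, sub_zero, abs_of_nonneg (heNn _)]
  exact lt_of_le_of_lt (le_trans hb1 hb2) hl₀
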